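/- Let π be a permutation of {1,…,n} and let c(π) be the number of orbits of π on {1,…,n} (cycles of π, including fixed points). Then the permutation game (I, I^π) has exactly 2^{c(π)} − 1 Nash equilibria. -/

import Mathlib

open Matrix BigOperators

/-- A mixed strategy: nonnegative entries summing to 1. -/
def IsMixed {I : Type*} [Fintype I] (x : I → ℝ) : Prop :=
  (∀ i, 0 ≤ x i) ∧ ∑ i, x i = 1

/-- `(x, y)` is a Nash equilibrium of the bimatrix game `(A, B)`. -/
def IsNash {I J : Type*} [Fintype I] [Fintype J]
    (A B : Matrix I J ℝ) (x : I → ℝ) (y : J → ℝ) : Prop :=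
  IsMixed x ∧ IsMixed y ∧
  (∀ x' : I → ℝ, IsMixed x' → x' ⬝ᵥ (A *ᵥ y) ≤ x ⬝ᵥ (A *ᵥ y)) ∧
  (∀ y' : J → ℝ, IsMixed y' → x ⬝ᵥ (B *ᵥ y') ≤ x ⬝ᵥ (B *ᵥ y))

/-- The matrix `I^π` whose `i`-th row is the transpose of the `π(i)`-th
standard unit vector. -/
def permMatrix {n : ℕ} (π : Equiv.Perm (Fin n)) : Matrix (Fin n) (Fin n) ℝ :=
  Matrix.of fun i j => if j = π i then 1 else 0

open scoped Classical

variable {n : ℕ}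

noncomputable def unif (S : Set (Fin n)) : Fin n → ℝ :=
  fun i => if i ∈ S then (S.ncard : ℝ)⁻¹ else 0

lemma sum_ite_mem_set (S : Set (Fin n)) (c : ℝ) :
    ∑ i : Fin n, (if i ∈ S then c else 0) = S.ncard * c := by
  have h : ∀ i : Fin n, (if i ∈ S then c else 0) = if i ∈ S.toFinset then c else 0 := by
    simp
  rw [Finset.sum_congr rfl fun i _ => h i, Finset.sum_ite_mem, Finset.univ_inter,
    Finset.sum_const, Set.ncard_eq_toFinset_card']
  simp [mul_comm]

lemma ncard_ne_zero {S : Set (Fin n)} (hS : S.Nonempty) : (S.ncard : ℝ) ≠ 0 := by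
  have := Set.ncard_pos (Set.toFinite S) |>.mpr hS
  positivity

lemma unif_mixed {S : Set (Fin n)} (hS : S.Nonempty) : IsMixed (unif S) := by
  constructor
  · intro i; unfold unif; split <;> positivity
  · rw [show (∑ i, unif S i) = S.ncard * (S.ncard : ℝ)⁻¹ from sum_ite_mem_set S _]
    exact mul_inv_cancel₀ (ncard_ne_zero hS)

lemma unif_ne_zero_iff {S : Set (Fin n)} (hS : S.Nonempty) (i : Fin n) :
    unif S i ≠ 0 ↔ i ∈ S := by
  unfold unif
  split <;> simp_all [inv_eq_zero, ncard_ne_zero hS]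

lemma unif_inj {S S' : Set (Fin n)} (hS : S.Nonempty) (hS' : S'.Nonempty)
    (h : unif S = unif S') : S = S' := by
  ext i
  rw [← unif_ne_zero_iff hS, ← unif_ne_zero_iff hS', h]

lemma mixed_dot_le_iff (v : Fin n → ℝ) (c : ℝ) :
    (∀ x' : Fin n → ℝ, IsMixed x' → ∑ i, x' i * v i ≤ c) ↔ ∀ k, v k ≤ c := by
  constructor
  · intro h k
    have hm : IsMixed (fun i => if i = k then (1:ℝ) else 0) := by
      constructor
      · intro i; dsimp only; split <;> norm_num
      · simp
    have := h _ hm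
    simpa using this
  · intro h x' hx'
    calc ∑ i, x' i * v i ≤ ∑ i, x' i * c :=
          Finset.sum_le_sum fun i _ => mul_le_mul_of_nonneg_left (h i) (hx'.1 i)
      _ = c := by rw [← Finset.sum_mul, hx'.2, one_mul]

lemma nash_iff' (π : Equiv.Perm (Fin n)) (x y : Fin n → ℝ) :
    IsNash (1 : Matrix (Fin n) (Fin n) ℝ) (permMatrix π) x y ↔
      IsMixed x ∧ IsMixed y ∧ (∀ k, y k ≤ ∑ i, x i * y i) ∧
        (∀ k, x (π.symm k) ≤ ∑ i, x i * y (π i)) := by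
  have hmv : ∀ z : Fin n → ℝ, permMatrix π *ᵥ z = fun i => z (π i) := by
    intro z; funext i
    simp [permMatrix, Matrix.mulVec, dotProduct]
  have hdot : ∀ a b : Fin n → ℝ, a ⬝ᵥ b = ∑ i, a i * b i := fun a b => rfl
  constructor
  · rintro ⟨hx, hy, h1, h2⟩
    refine ⟨hx, hy, ?_, ?_⟩
    · rw [← mixed_dot_le_iff]
      intro x' hx'
      have := h1 x' hx'
      simpa [Matrix.one_mulVec, hdot] using this
    · intro k
      have key : ∀ y' : Fin n → ℝ, IsMixed y' →
          ∑ j, y' j * x (π.symm j) ≤ ∑ i, x i * y (π i) := by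
        intro y' hy'
        have := h2 y' hy'
        rw [hmv, hmv, hdot, hdot] at this
        calc ∑ j, y' j * x (π.symm j) = ∑ i, x i * y' (π i) := by
              rw [← Equiv.sum_comp π (fun j => y' j * x (π.symm j))]
              simp [mul_comm]
          _ ≤ ∑ i, x i * y (π i) := this
      exact (mixed_dot_le_iff _ _).mp key k
  · rintro ⟨hx, hy, h1, h2⟩
    refine ⟨hx, hy, ?_, ?_⟩
    · intro x' hx'
      simp only [Matrix.one_mulVec, hdot]
      exact (mixed_dot_le_iff _ _).mpr h1 x' hx'
    · intro y' hy'
      rw [hmv, hmv, hdot, hdot]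
      calc ∑ i, x i * y' (π i) = ∑ j, y' j * x (π.symm j) := by
            rw [← Equiv.sum_comp π (fun j => y' j * x (π.symm j))]
            simp [mul_comm]
        _ ≤ ∑ i, x i * y (π i) := (mixed_dot_le_iff _ _).mpr h2 y' hy'

lemma eq_on_support {x v : Fin n → ℝ} {c : ℝ} (hx : IsMixed x)
    (hv : ∀ i, v i ≤ c) (hsum : ∑ i, x i * v i = c) :
    ∀ i, 0 < x i → v i = c := by
  intro i hi
  have h0 : ∑ j, x j * (c - v j) = 0 := by
    simp only [mul_sub, Finset.sum_sub_distrib, ← Finset.sum_mul, hx.2, one_mul, hsum, sub_self]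
  have hnn : ∀ j ∈ Finset.univ, (0:ℝ) ≤ x j * (c - v j) :=
    fun j _ => mul_nonneg (hx.1 j) (sub_nonneg.mpr (hv j))
  have := (Finset.sum_eq_zero_iff_of_nonneg hnn).mp h0 i (Finset.mem_univ i)
  have hx0 : x i ≠ 0 := ne_of_gt hi
  have : c - v i = 0 := by
    rcases mul_eq_zero.mp this with h | h
    · exact absurd h hx0
    · exact h
  linarith

lemma mixed_exists_pos {x : Fin n → ℝ} (hx : IsMixed x) : ∃ i, 0 < x i := by
  by_contra h
  push_neg at h
  have : ∑ i, x i = 0 := Finset.sum_eq_zero fun i _ => le_antisymm (h i) (hx.1 i)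
  rw [hx.2] at this
  norm_num at this

lemma nash_char (π : Equiv.Perm (Fin n)) (x y : Fin n → ℝ) :
    IsNash (1 : Matrix (Fin n) (Fin n) ℝ) (permMatrix π) x y ↔
      ∃ S : Set (Fin n), S.Nonempty ∧ π '' S = S ∧ x = unif S ∧ y = unif S := by
  rw [nash_iff' π x y]
  constructor
  · rintro ⟨hx, hy, h1, h2⟩
    set v := ∑ i, x i * y i with hv
    set w := ∑ i, x i * y (π i) with hw
    set S := {i | 0 < x i} with hSdef
    set T := {i | 0 < y i} with hTdef
    -- basic facts
    have hx_le : ∀ k, x k ≤ w := fun k => by simpa using h2 (π k)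
    have hxsupp : ∀ i, 0 < x i → y i = v := eq_on_support hx h1 rfl
    have hysupp : ∀ j, 0 < y j → x (π.symm j) = w := by
      have hsum : ∑ j, y j * x (π.symm j) = w := by
        rw [hw, ← Equiv.sum_comp π (fun j => y j * x (π.symm j))]
        simp [mul_comm]
      exact eq_on_support hy (fun j => by simpa using h2 j) hsum
    have hv_pos : 0 < v := by
      obtain ⟨j, hj⟩ := mixed_exists_pos hy
      exact lt_of_lt_of_le hj (h1 j)
    have hw_pos : 0 < w := by
      obtain ⟨i, hi⟩ := mixed_exists_pos hx
      exact lt_of_lt_of_le hi (hx_le i)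
    have hST : S ⊆ T := fun i hi => by
      have := hxsupp i hi
      simp only [hTdef, Set.mem_setOf_eq, this]
      exact hv_pos
    have hTpS : T ⊆ π '' S := by
      intro j hj
      have : 0 < x (π.symm j) := by rw [hysupp j hj]; exact hw_pos
      exact ⟨π.symm j, this, Equiv.apply_symm_apply π j⟩
    have hcard : (π '' S).ncard = S.ncard := Set.ncard_image_of_injective S π.injective
    have hSeqT : S = T :=
      Set.eq_of_subset_of_ncard_le hST
        (le_trans (Set.ncard_le_ncard hTpS (Set.toFinite _)) hcard.le) (Set.toFinite T)
    have hTeqpS : T = π '' S :=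
      Set.eq_of_subset_of_ncard_le hTpS (by rw [hcard, hSeqT]) (Set.toFinite _)
    have hinv : π '' S = S := by rw [← hTeqpS, hSeqT]
    have hSne : S.Nonempty := mixed_exists_pos hx
    refine ⟨S, hSne, hinv, ?_, ?_⟩
    · -- x = unif S
      have hxeq : x = fun i => if i ∈ S then w else 0 := by
        funext i
        by_cases hi : i ∈ S
        · simp only [hi, if_pos]
          have hpi : π i ∈ T := by rw [← hSeqT, ← hinv]; exact ⟨i, hi, rfl⟩
          have := hysupp (π i) hpi
          simpa using this
        · simp only [hi, if_false]
          have : ¬ 0 < x i := hi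
          linarith [hx.1 i]
      have hwval : w = (S.ncard : ℝ)⁻¹ := by
        have h1sum : (S.ncard : ℝ) * w = 1 := by
          rw [← sum_ite_mem_set S w, ← hx.2, hxeq]
        exact eq_inv_of_mul_eq_one_left (by rw [mul_comm]; exact h1sum)
      rw [hxeq, hwval]; rfl
    · -- y = unif S
      have hyeq : y = fun i => if i ∈ S then v else 0 := by
        funext i
        by_cases hi : i ∈ S
        · simp only [hi, if_pos]
          exact hxsupp i hi
        · simp only [hi, if_neg, if_false]
          have hiT : i ∉ T := fun h => hi (hSeqT ▸ h)
          have : ¬ 0 < y i := hiT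
          linarith [hy.1 i]
      have hvval : v = (S.ncard : ℝ)⁻¹ := by
        have h1sum : (S.ncard : ℝ) * v = 1 := by
          rw [← sum_ite_mem_set S v, ← hy.2, hyeq]
        exact eq_inv_of_mul_eq_one_left (by rw [mul_comm]; exact h1sum)
      rw [hyeq, hvval]; rfl
  · rintro ⟨S, hSne, hinv, rfl, rfl⟩
    have hmix := unif_mixed hSne
    have hmem : ∀ i, π i ∈ S ↔ i ∈ S := by
      intro i
      constructor
      · intro h
        rw [← hinv] at h
        obtain ⟨j, hj, hji⟩ := h
        rwa [← π.injective hji]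
      · intro h; rw [← hinv]; exact ⟨i, h, rfl⟩
    have hcomp : ∀ i, unif S (π i) = unif S i := by
      intro i; unfold unif; rw [if_congr (hmem i) rfl rfl]
    set u := (S.ncard : ℝ)⁻¹ with hu
    have hu_nn : 0 ≤ u := by positivity
    have hval : ∑ i, unif S i * unif S i = u := by
      have : ∀ i, unif S i * unif S i = if i ∈ S then u * u else 0 := by
        intro i; by_cases h : i ∈ S <;> simp [unif, h, hu]
      rw [Finset.sum_congr rfl fun i _ => this i, sum_ite_mem_set, ← mul_assoc,
        mul_inv_cancel₀ (ncard_ne_zero hSne), one_mul]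
    have hle : ∀ k, unif S k ≤ u := by
      intro k; unfold unif; split
      · exact le_refl u
      · exact hu_nn
    refine ⟨hmix, hmix, ?_, ?_⟩
    · intro k; rw [hval]; exact hle k
    · intro k
      have : ∑ i, unif S i * unif S (π i) = u := by
        rw [Finset.sum_congr rfl fun i _ => by rw [hcomp i], hval]
      rw [this]; exact hle _


/-- The number of orbits of `π` on `{1,…,n}` (cycles of `π`, including fixed
points): the number of distinct `SameCycle`-classes. -/
noncomputable def numOrbits {n : ℕ} (π : Equiv.Perm (Fin n)) : ℕ :=
  {s : Set (Fin n) | ∃ i, s = {j | π.SameCycle i j}}.ncard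

def cycSetoid (π : Equiv.Perm (Fin n)) : Setoid (Fin n) :=
  ⟨π.SameCycle, ⟨fun x => Equiv.Perm.SameCycle.refl π x, fun h => h.symm, fun h h' => h.trans h'⟩⟩

noncomputable def orbitClass (π : Equiv.Perm (Fin n)) : Quotient (cycSetoid π) → Set (Fin n) :=
  Quotient.lift (fun i => {j | π.SameCycle i j}) (by
    intro a b hab
    ext j
    exact ⟨fun h => hab.symm.trans h, fun h => hab.trans h⟩)

lemma orbitClass_inj (π : Equiv.Perm (Fin n)) : Function.Injective (orbitClass π) := by
  intro q q'
  induction q using Quotient.ind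
  induction q' using Quotient.ind
  rename_i a b
  intro h
  apply Quotient.sound
  have hb : b ∈ orbitClass π (Quotient.mk (cycSetoid π) b) := Equiv.Perm.SameCycle.refl π b
  rw [← h] at hb
  exact hb

lemma range_orbitClass (π : Equiv.Perm (Fin n)) :
    Set.range (orbitClass π) = {s : Set (Fin n) | ∃ i, s = {j | π.SameCycle i j}} := by
  ext s
  constructor
  · rintro ⟨q, rfl⟩
    induction q using Quotient.ind
    rename_i i
    exact ⟨i, rfl⟩
  · rintro ⟨i, rfl⟩
    exact ⟨Quotient.mk _ i, rfl⟩

lemma numOrbits_eq (π : Equiv.Perm (Fin n)) :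
    numOrbits π = Nat.card (Quotient (cycSetoid π)) := by
  rw [numOrbits, ← range_orbitClass, ← Set.image_univ,
    Set.ncard_image_of_injective _ (orbitClass_inj π), Set.ncard_univ]

open Pointwise in
lemma inv_closed {π : Equiv.Perm (Fin n)} {S : Set (Fin n)}
    (h : π '' S = S) {i j : Fin n} (hc : π.SameCycle i j) : i ∈ S ↔ j ∈ S := by
  obtain ⟨k, hk⟩ := hc
  have hst : π ∈ MulAction.stabilizer (Equiv.Perm (Fin n)) S :=
    MulAction.mem_stabilizer_iff.mpr h
  have hk' : (π ^ k) '' S = S := MulAction.mem_stabilizer_iff.mp (zpow_mem hst k)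
  subst hk
  constructor
  · intro hi; rw [← hk']; exact ⟨i, hi, rfl⟩
  · intro hj
    rw [← hk'] at hj
    obtain ⟨i', hi', he⟩ := hj
    rwa [← (π ^ k).injective he]

lemma count_invariant (π : Equiv.Perm (Fin n)) :
    {S : Set (Fin n) | S.Nonempty ∧ π '' S = S}.ncard = 2 ^ numOrbits π - 1 := by
  set Q := Quotient (cycSetoid π) with hQ
  set mk : Fin n → Q := Quotient.mk (cycSetoid π) with hmk
  set F : Set Q → Set (Fin n) := fun T => mk ⁻¹' T with hF
  have hmksur : Function.Surjective mk := Quotient.mk_surjective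
  have hFinj : Function.Injective F := Set.preimage_injective.mpr hmksur
  have hFinv : ∀ T, π '' F T = F T := by
    intro T
    rw [Equiv.image_eq_preimage_symm]
    ext i
    have hcyc : π.SameCycle (π.symm i) i := ⟨1, by simp⟩
    have hmkeq : mk (π.symm i) = mk i := Quotient.sound hcyc
    simp only [Set.mem_preimage, hF, hmkeq]
  have hSur : ∀ S : Set (Fin n), π '' S = S → F (mk '' S) = S := by
    intro S hS
    ext i
    simp only [hF, Set.mem_preimage, Set.mem_image]
    constructor
    · rintro ⟨j, hj, hji⟩
      exact (inv_closed hS (Quotient.exact hji)).mp hj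
    · intro hi; exact ⟨i, hi, rfl⟩
  have hset : {S : Set (Fin n) | S.Nonempty ∧ π '' S = S} = F '' {T : Set Q | T.Nonempty} := by
    ext S
    constructor
    · rintro ⟨hne, hinv⟩
      exact ⟨mk '' S, hne.image mk, hSur S hinv⟩
    · rintro ⟨T, hT, rfl⟩
      refine ⟨?_, hFinv T⟩
      obtain ⟨q, hq⟩ := hT
      obtain ⟨i, rfl⟩ := hmksur q
      exact ⟨i, hq⟩
  rw [hset, Set.ncard_image_of_injective _ hFinj, numOrbits_eq]
  haveI : Fintype Q := Fintype.ofFinite Q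
  have h1 : {T : Set Q | T.Nonempty} = Set.univ \ {∅} := by
    ext T
    simp [Set.nonempty_iff_ne_empty]
  rw [h1, Set.ncard_diff (Set.subset_univ _), Set.ncard_univ, Set.ncard_singleton]
  congr 1
  rw [Nat.card_eq_fintype_card, Fintype.card_set, Nat.card_eq_fintype_card]


/-- The permutation game `(I, I^π)` has exactly `2^{c(π)} − 1` Nash equilibria,
where `c(π)` is the number of orbits of `π`. -/
theorem stmt7 {n : ℕ} (π : Equiv.Perm (Fin n)) :
    {p : (Fin n → ℝ) × (Fin n → ℝ) |
        IsNash (1 : Matrix (Fin n) (Fin n) ℝ) (permMatrix π) p.1 p.2}.ncard =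
      2 ^ numOrbits π - 1 := by
  have hset : {p : (Fin n → ℝ) × (Fin n → ℝ) |
      IsNash (1 : Matrix (Fin n) (Fin n) ℝ) (permMatrix π) p.1 p.2}
      = (fun S => (unif S, unif S)) '' {S : Set (Fin n) | S.Nonempty ∧ π '' S = S} := by
    ext p
    simp only [Set.mem_setOf_eq, Set.mem_image]
    rw [nash_char π p.1 p.2]
    constructor
    · rintro ⟨S, h1, h2, h3, h4⟩
      exact ⟨S, ⟨h1, h2⟩, by rw [Prod.ext_iff]; exact ⟨h3.symm, h4.symm⟩⟩
    · rintro ⟨S, ⟨h1, h2⟩, rfl⟩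
      exact ⟨S, h1, h2, rfl, rfl⟩
  rw [hset, Set.ncard_image_of_injOn, count_invariant]
  intro S hS S' hS' h
  exact unif_inj hS.1 hS'.1 (congrArg Prod.fst h)
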